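/- Let X be a finite set of alternatives, k ≥ 1 an integer, and (𝓑 = {B₁, …, Bₙ}, c) a finite data set that is rationalizable with k-th order CLA. Then for every x ∈ X, the minimum of |{y ∈ X : y ≠ x and s(y) = 1}| over all lower-contour solutions (u, (Aᵢ), s) for x equals the minimum of |{y ∈ X : x ≻ y}| over all rationalizing pairs (≻, Γ); in particular the lower bound produced by the program is tight, i.e., it is attained by the strict lower contour set of x under some rationalizing pair. -/

import Mathlib

/-- A strict preference relation: complete on distinct elements, transitive, asymmetric. -/
def StrictPref {X : Type*} (r : X → X → Prop) : Prop :=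
  (∀ x y : X, x ≠ y → r x y ∨ r y x) ∧
  (∀ x y z : X, r x y → r y z → r x z) ∧
  (∀ x y : X, r x y → ¬ r y x)

/-- An attention filter: for every nonempty budget `B`, `Γ B` is a nonempty subset of `B`,
and removing an unconsidered alternative does not change the consideration set. -/
def AttentionFilter {X : Type*} [DecidableEq X] (Γ : Finset X → Finset X) : Prop :=
  ∀ B : Finset X, B.Nonempty →
    (Γ B).Nonempty ∧ Γ B ⊆ B ∧ ∀ x ∈ B, x ∉ Γ B → Γ (B.erase x) = Γ B

/-- `(r, Γ)` is a rationalizing pair for the data set `(𝓑, c)` with `k`-th order CLA. -/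
def Rationalizes {X : Type*} [DecidableEq X] (𝓑 : Set (Finset X)) (c : Finset X → X)
    (k : ℕ) (r : X → X → Prop) (Γ : Finset X → Finset X) : Prop :=
  StrictPref r ∧ AttentionFilter Γ ∧
  (∀ B : Finset X, B.Nonempty → min B.card k ≤ (Γ B).card) ∧
  ∀ B ∈ 𝓑, c B ∈ Γ B ∧ ∀ y ∈ Γ B, y ≠ c B → r (c B) y

/-- The data set `(𝓑, c)` is rationalizable with `k`-th order CLA. -/
def RationalizableCLA {X : Type*} [DecidableEq X] (𝓑 : Set (Finset X))
    (c : Finset X → X) (k : ℕ) : Prop :=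
  ∃ (r : X → X → Prop) (Γ : Finset X → Finset X), Rationalizes 𝓑 c k r Γ

/-- A feasible configuration for the finite data set `(B₁, …, Bₙ, c)` and threshold `k`
(the big-M-free formulation of the mixed integer program, with `A i = {x_j : δ i j = 1}`). -/
def FeasibleConfig {X : Type*} [DecidableEq X] {n : ℕ} (B : Fin n → Finset X)
    (c : Finset X → X) (k : ℕ) (u : X → ℝ) (A : Fin n → Finset X) : Prop :=
  (∀ i, c (B i) ∈ A i) ∧ (∀ i, A i ⊆ B i) ∧
  (∀ i, ∀ y ∈ A i, y ≠ c (B i) → u y < u (c (B i))) ∧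
  (∀ i, min k (B i).card ≤ (A i).card) ∧
  (∀ i j, c (B i) ≠ c (B j) → c (B i) ∈ B i ∩ B j → c (B j) ∈ B i ∩ B j →
    (A i ∩ (B i \ B j)).Nonempty ∨ (A j ∩ (B j \ B i)).Nonempty)

/-- A lower-contour solution for the distinguished alternative `x`:
a feasible configuration together with an indicator `s` with `s x` and such that
considered alternatives inherit membership from the choice. -/
def LowerContourSol {X : Type*} [DecidableEq X] {n : ℕ} (B : Fin n → Finset X)
    (c : Finset X → X) (k : ℕ) (x : X) (u : X → ℝ) (A : Fin n → Finset X)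
    (s : X → Prop) : Prop :=
  FeasibleConfig B c k u A ∧ s x ∧ ∀ i, ∀ y ∈ A i, s (c (B i)) → s y

section Auxiliary

open Classical

variable {X : Type*} [Fintype X] [DecidableEq X]

/-- An attention filter is constant between `Γ B` and `B`. -/
lemma attentionFilter_eq_of_between {Γ : Finset X → Finset X} (hΓ : AttentionFilter Γ) :
    ∀ m (Bv C : Finset X), (Bv \ C).card = m → Γ Bv ⊆ C → C ⊆ Bv → Bv.Nonempty →
      Γ C = Γ Bv := by
  intro m
  induction m with
  | zero =>
    intro Bv C h hsub hCB _
    have hempty : Bv \ C = ∅ := Finset.card_eq_zero.mp h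
    have hBC : Bv ⊆ C := by
      intro z hz
      by_contra hzC
      have : z ∈ Bv \ C := Finset.mem_sdiff.mpr ⟨hz, hzC⟩
      simp [hempty] at this
    rw [Finset.Subset.antisymm hCB hBC]
  | succ m ih =>
    intro Bv C h hsub hCB hB
    have hne : (Bv \ C).Nonempty := by rw [← Finset.card_pos, h]; omega
    obtain ⟨z, hz⟩ := hne
    have hzB : z ∈ Bv := (Finset.mem_sdiff.mp hz).1
    have hzC : z ∉ C := (Finset.mem_sdiff.mp hz).2
    have hzΓ : z ∉ Γ Bv := fun hmem => hzC (hsub hmem)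
    have heq := ((hΓ Bv hB).2.2) z hzB hzΓ
    have hΓsub : Γ (Bv.erase z) ⊆ C := by rw [heq]; exact hsub
    have hCsub : C ⊆ Bv.erase z := fun y hy =>
      Finset.mem_erase.mpr ⟨fun hyz => hzC (hyz ▸ hy), hCB hy⟩
    have hcard : (Bv.erase z \ C).card = m := by
      have hset : Bv.erase z \ C = (Bv \ C).erase z := by
        ext w
        simp only [Finset.mem_sdiff, Finset.mem_erase]
        tauto
      rw [hset, Finset.card_erase_of_mem hz, h]
      omega
    have hBe : (Bv.erase z).Nonempty := by
      obtain ⟨w, hw⟩ := (hΓ Bv hB).1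
      exact ⟨w, hCsub (hsub hw)⟩
    rw [← heq]
    exact ih (Bv.erase z) C hcard hΓsub hCsub hBe

/-- Direction (a): from a rationalizing pair to a lower-contour solution. -/
lemma dirA {n : ℕ} {B : Fin n → Finset X} {c : Finset X → X} {k : ℕ}
    {r : X → X → Prop} {Γ : Finset X → Finset X}
    (hc : ∀ i, c (B i) ∈ B i)
    (hR : Rationalizes (Set.range B) c k r Γ) (x : X) :
    ∃ u A s, LowerContourSol B c k x u A s ∧
      {y : X | y ≠ x ∧ s y} = {y : X | r x y} := by
  obtain ⟨⟨hcom, htr, has⟩, hAF, hsize, hbud⟩ := hR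
  set u : X → ℝ := fun a => ((Finset.univ.filter (fun z => r a z)).card : ℝ) with hu
  have hmono : ∀ a b, r a b → u b < u a := by
    intro a b hab
    have hss : Finset.univ.filter (fun z => r b z) ⊂ Finset.univ.filter (fun z => r a z) := by
      constructor
      · intro z hz
        simp only [Finset.mem_filter] at *
        exact ⟨hz.1, htr a b z hab hz.2⟩
      · intro hcontra
        have hb : b ∈ Finset.univ.filter (fun z => r a z) := by
          simp only [Finset.mem_filter]; exact ⟨Finset.mem_univ _, hab⟩
        have hb2 := hcontra hb
        simp only [Finset.mem_filter] at hb2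
        exact has b b hb2.2 hb2.2
    have hcl := Finset.card_lt_card hss
    simp only [hu]
    exact_mod_cast hcl
  have hrange : ∀ i : Fin n, (B i) ∈ Set.range B := fun i => ⟨i, rfl⟩
  have hΓsub : ∀ i : Fin n, Γ (B i) ⊆ B i := fun i => (hAF (B i) ⟨c (B i), hc i⟩).2.1
  refine ⟨u, fun i => Γ (B i), fun y => y = x ∨ r x y,
    ⟨⟨fun i => (hbud _ (hrange i)).1, hΓsub, ?_, ?_, ?_⟩, Or.inl rfl, ?_⟩, ?_⟩
  · intro i y hy hne
    exact hmono _ _ ((hbud _ (hrange i)).2 y hy hne)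
  · intro i
    rw [min_comm]
    exact hsize (B i) ⟨c (B i), hc i⟩
  · intro i j hne hci hcj
    by_contra hcon
    push_neg at hcon
    obtain ⟨h1, h2⟩ := hcon
    have hsub1 : Γ (B i) ⊆ B i ∩ B j := by
      intro z hz
      have hzB : z ∈ B i := hΓsub i hz
      by_cases h : z ∈ B j
      · exact Finset.mem_inter.mpr ⟨hzB, h⟩
      · exfalso
        have : z ∈ Γ (B i) ∩ (B i \ B j) :=
          Finset.mem_inter.mpr ⟨hz, Finset.mem_sdiff.mpr ⟨hzB, h⟩⟩
        simp [h1] at this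
    have hsub2 : Γ (B j) ⊆ B i ∩ B j := by
      intro z hz
      have hzB : z ∈ B j := hΓsub j hz
      by_cases h : z ∈ B i
      · exact Finset.mem_inter.mpr ⟨h, hzB⟩
      · exfalso
        have : z ∈ Γ (B j) ∩ (B j \ B i) :=
          Finset.mem_inter.mpr ⟨hz, Finset.mem_sdiff.mpr ⟨hzB, h⟩⟩
        simp [h2] at this
    have e1 : Γ (B i ∩ B j) = Γ (B i) :=
      attentionFilter_eq_of_between hAF _ (B i) (B i ∩ B j) rfl hsub1
        Finset.inter_subset_left ⟨c (B i), hc i⟩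
    have e2 : Γ (B i ∩ B j) = Γ (B j) :=
      attentionFilter_eq_of_between hAF _ (B j) (B i ∩ B j) rfl hsub2
        Finset.inter_subset_right ⟨c (B j), hc j⟩
    have hm1 : c (B j) ∈ Γ (B i) := by rw [← e1, e2]; exact (hbud _ (hrange j)).1
    have hm2 : c (B i) ∈ Γ (B j) := by rw [← e2, e1]; exact (hbud _ (hrange i)).1
    have h3 := (hbud _ (hrange i)).2 (c (B j)) hm1 (Ne.symm hne)
    have h4 := (hbud _ (hrange j)).2 (c (B i)) hm2 hne
    exact has _ _ h3 h4
  · intro i y hy hsc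
    by_cases h : y = c (B i)
    · rw [h]; exact hsc
    · have hr := (hbud _ (hrange i)).2 y hy h
      rcases hsc with heq | hxc
      · exact Or.inr (heq ▸ hr)
      · exact Or.inr (htr _ _ _ hxc hr)
  · ext y
    simp only [Set.mem_setOf_eq]
    constructor
    · rintro ⟨hne, hy⟩
      rcases hy with h | h
      · exact absurd h hne
      · exact h
    · intro h
      exact ⟨fun hyx => (has x y h) (by rw [hyx] at h ⊢; exact h), Or.inr h⟩

end Auxiliary
section Construction

open Classical

variable {X : Type*} [Fintype X] [DecidableEq X]

/-- The anchor of a menu `D`: the (unique) choice of a budget from which `D` is reachable by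
deleting unattended items; otherwise a maximal element of `D`. -/
noncomputable def anch {n : ℕ} (B : Fin n → Finset X) (c : Finset X → X) {E : Type*}
    [LinearOrder E] (e : X → E) (x0 : X) (D : Finset X) : X :=
  if h : ∃ j : Fin n, D ⊆ B j ∧ ∀ z ∈ B j, z ∉ D → e (c (B j)) < e z then c (B h.choose)
  else if h2 : D.Nonempty then (Finset.exists_max_image D e h2).choose
  else x0

/-- The constructed attention filter: everything in `D` not above the anchor. -/
noncomputable def GamF {n : ℕ} (B : Fin n → Finset X) (c : Finset X → X) {E : Type*}
    [LinearOrder E] (e : X → E) (x0 : X) (D : Finset X) : Finset X :=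
  D.filter (fun y => ¬ e (anch B c e x0 D) < e y)

/-- Direction (b): from a feasible configuration (with preference given by an injective
utility `e` into a linear order) to a rationalizing pair. -/
lemma dirB {n : ℕ} {B : Fin n → Finset X} {c : Finset X → X} {k : ℕ}
    {E : Type*} [LinearOrder E] {e : X → E} (he : Function.Injective e)
    {A : Fin n → Finset X}
    (hc : ∀ i, c (B i) ∈ B i)
    (h1 : ∀ i, c (B i) ∈ A i) (h2 : ∀ i, A i ⊆ B i)
    (h3 : ∀ i, ∀ y ∈ A i, y ≠ c (B i) → e y < e (c (B i)))
    (h4 : ∀ i, min k (B i).card ≤ (A i).card)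
    (h5 : ∀ i j, c (B i) ≠ c (B j) → c (B i) ∈ B i ∩ B j → c (B j) ∈ B i ∩ B j →
      (A i ∩ (B i \ B j)).Nonempty ∨ (A j ∩ (B j \ B i)).Nonempty)
    (x0 : X) :
    Rationalizes (Set.range B) c k (fun a b => e b < e a) (GamF B c e x0) := by
  -- uniqueness of the anchor choice
  have key : ∀ (D : Finset X) (j l : Fin n),
      (D ⊆ B j ∧ ∀ z ∈ B j, z ∉ D → e (c (B j)) < e z) →
      (D ⊆ B l ∧ ∀ z ∈ B l, z ∉ D → e (c (B l)) < e z) →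
      c (B j) = c (B l) := by
    intro D j l hj hl
    obtain ⟨hj1, hj2⟩ := hj
    obtain ⟨hl1, hl2⟩ := hl
    by_contra hne
    have hcjD : c (B j) ∈ D := by
      by_contra h
      exact lt_irrefl _ (hj2 _ (hc j) h)
    have hclD : c (B l) ∈ D := by
      by_contra h
      exact lt_irrefl _ (hl2 _ (hc l) h)
    rcases h5 j l hne (Finset.mem_inter.mpr ⟨hc j, hl1 hcjD⟩)
        (Finset.mem_inter.mpr ⟨hj1 hclD, hc l⟩) with ⟨z, hz⟩ | ⟨z, hz⟩
    · rw [Finset.mem_inter, Finset.mem_sdiff] at hz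
      obtain ⟨hzA, hzB, hzL⟩ := hz
      have hzD : z ∉ D := fun h => hzL (hl1 h)
      have hlt := hj2 z hzB hzD
      have hzne : z ≠ c (B j) := fun h => hzD (h ▸ hcjD)
      exact absurd (h3 j z hzA hzne) (not_lt.mpr hlt.le)
    · rw [Finset.mem_inter, Finset.mem_sdiff] at hz
      obtain ⟨hzA, hzB, hzL⟩ := hz
      have hzD : z ∉ D := fun h => hzL (hj1 h)
      have hlt := hl2 z hzB hzD
      have hzne : z ≠ c (B l) := fun h => hzD (h ▸ hclD)
      exact absurd (h3 l z hzA hzne) (not_lt.mpr hlt.le)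
  have anch_spec : ∀ (D : Finset X) (j : Fin n),
      (D ⊆ B j ∧ ∀ z ∈ B j, z ∉ D → e (c (B j)) < e z) → anch B c e x0 D = c (B j) := by
    intro D j hj
    have hex : ∃ j : Fin n, D ⊆ B j ∧ ∀ z ∈ B j, z ∉ D → e (c (B j)) < e z := ⟨j, hj⟩
    rw [anch, dif_pos hex]
    exact key D _ j hex.choose_spec hj
  have anch_mem : ∀ D : Finset X, D.Nonempty → anch B c e x0 D ∈ D := by
    intro D hD
    by_cases hex : ∃ j : Fin n, D ⊆ B j ∧ ∀ z ∈ B j, z ∉ D → e (c (B j)) < e z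
    · rw [anch, dif_pos hex]
      by_contra h
      exact lt_irrefl _ (hex.choose_spec.2 _ (hc hex.choose) h)
    · rw [anch, dif_neg hex, dif_pos hD]
      exact (Finset.exists_max_image D e hD).choose_spec.1
  have anch_max : ∀ D : Finset X, D.Nonempty →
      (¬ ∃ j : Fin n, D ⊆ B j ∧ ∀ z ∈ B j, z ∉ D → e (c (B j)) < e z) →
      ∀ y ∈ D, e y ≤ e (anch B c e x0 D) := by
    intro D hD hex y hy
    rw [anch, dif_neg hex, dif_pos hD]
    exact (Finset.exists_max_image D e hD).choose_spec.2 y hy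
  refine ⟨⟨?_, ?_, ?_⟩, ?_, ?_, ?_⟩
  · -- completeness
    intro a b hab
    rcases lt_or_gt_of_ne (fun h : e a = e b => hab (he h)) with h | h
    · exact Or.inr h
    · exact Or.inl h
  · -- transitivity
    intro a b d hab hbd
    exact lt_trans hbd hab
  · -- asymmetry
    intro a b hab
    exact lt_asymm hab
  · -- attention filter
    intro D hD
    refine ⟨⟨anch B c e x0 D, Finset.mem_filter.mpr ⟨anch_mem D hD, lt_irrefl _⟩⟩,
      Finset.filter_subset _ _, ?_⟩
    intro z hzD hzΓ
    have hlt : e (anch B c e x0 D) < e z := by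
      by_contra h
      exact hzΓ (Finset.mem_filter.mpr ⟨hzD, h⟩)
    by_cases hex : ∃ j : Fin n, D ⊆ B j ∧ ∀ w ∈ B j, w ∉ D → e (c (B j)) < e w
    · obtain ⟨j, hj1, hj2⟩ := hex
      have haD := anch_spec D j ⟨hj1, hj2⟩
      have hj' : D.erase z ⊆ B j ∧ ∀ w ∈ B j, w ∉ D.erase z → e (c (B j)) < e w := by
        refine ⟨(Finset.erase_subset _ _).trans hj1, ?_⟩
        intro w hw hwD
        by_cases hwz : w = z
        · subst hwz
          rw [← haD]
          exact hlt
        · exact hj2 w hw (fun hwD' => hwD (Finset.mem_erase.mpr ⟨hwz, hwD'⟩))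
      have haD' := anch_spec (D.erase z) j hj'
      ext y
      simp only [GamF, Finset.mem_filter, Finset.mem_erase, haD, haD']
      constructor
      · rintro ⟨⟨_, hyD⟩, hy⟩
        exact ⟨hyD, hy⟩
      · rintro ⟨hyD, hy⟩
        refine ⟨⟨?_, hyD⟩, hy⟩
        rintro rfl
        rw [← haD] at hy
        exact hy hlt
    · exact absurd (anch_max D hD hex z hzD) (not_le.mpr hlt)
  · -- cardinality
    intro D hD
    by_cases hex : ∃ j : Fin n, D ⊆ B j ∧ ∀ w ∈ B j, w ∉ D → e (c (B j)) < e w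
    · obtain ⟨j, hj1, hj2⟩ := hex
      have haD := anch_spec D j ⟨hj1, hj2⟩
      have hAsub : A j ⊆ GamF B c e x0 D := by
        intro y hy
        have hyB : y ∈ B j := h2 j hy
        have hcjD : c (B j) ∈ D := by
          by_contra h
          exact lt_irrefl _ (hj2 _ (hc j) h)
        have hyD : y ∈ D := by
          by_contra h
          have hgt := hj2 y hyB h
          by_cases hyc : y = c (B j)
          · rw [hyc] at hgt
            exact lt_irrefl _ hgt
          · exact absurd (h3 j y hy hyc) (not_lt.mpr hgt.le)
        refine Finset.mem_filter.mpr ⟨hyD, ?_⟩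
        rw [haD]
        by_cases hyc : y = c (B j)
        · rw [hyc]
          exact lt_irrefl _
        · exact lt_asymm (h3 j y hy hyc)
      have hle1 := Finset.card_le_card hAsub
      have hle2 := Finset.card_le_card hj1
      have hle3 := h4 j
      omega
    · have hGD : GamF B c e x0 D = D := by
        ext y
        simp only [GamF, Finset.mem_filter, and_iff_left_iff_imp]
        intro hyD
        exact not_lt.mpr (anch_max D hD hex y hyD)
      rw [hGD]
      exact min_le_left _ _
  · -- budgets
    rintro D ⟨i, rfl⟩
    have hi : B i ⊆ B i ∧ ∀ z ∈ B i, z ∉ B i → e (c (B i)) < e z :=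
      ⟨subset_rfl, fun z hz hz' => absurd hz hz'⟩
    have ha := anch_spec (B i) i hi
    constructor
    · exact Finset.mem_filter.mpr ⟨hc i, by rw [ha]; exact lt_irrefl _⟩
    · intro y hy hyne
      have hy2 := (Finset.mem_filter.mp hy).2
      rw [ha] at hy2
      rcases lt_or_gt_of_ne (fun h : e y = e (c (B i)) => hyne (he h)) with h | h
      · exact h
      · exact absurd h hy2

end Construction
theorem lowerContour_bound_tight {X : Type*} [Fintype X] [DecidableEq X] {n : ℕ}
    (B : Fin n → Finset X) (c : Finset X → X) (k : ℕ) (hk : 1 ≤ k)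
    (hchoice : ∀ i, c (B i) ∈ B i)
    (hrat : RationalizableCLA (Set.range B) c k) (x : X) :
    sInf {m : ℕ | ∃ (u : X → ℝ) (A : Fin n → Finset X) (s : X → Prop),
        LowerContourSol B c k x u A s ∧ m = Set.ncard {y : X | y ≠ x ∧ s y}} =
      sInf {m : ℕ | ∃ (r : X → X → Prop) (Γ : Finset X → Finset X),
        Rationalizes (Set.range B) c k r Γ ∧ m = Set.ncard {y : X | r x y}} ∧
    ∃ (r : X → X → Prop) (Γ : Finset X → Finset X),
      Rationalizes (Set.range B) c k r Γ ∧
      Set.ncard {y : X | r x y} =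
        sInf {m : ℕ | ∃ (u : X → ℝ) (A : Fin n → Finset X) (s : X → Prop),
          LowerContourSol B c k x u A s ∧ m = Set.ncard {y : X | y ≠ x ∧ s y}} := by
  classical
  obtain ⟨r0, Γ0, hR0⟩ := hrat
  set S1 := {m : ℕ | ∃ (u : X → ℝ) (A : Fin n → Finset X) (s : X → Prop),
      LowerContourSol B c k x u A s ∧ m = Set.ncard {y : X | y ≠ x ∧ s y}} with hS1def
  set S2 := {m : ℕ | ∃ (r : X → X → Prop) (Γ : Finset X → Finset X),
      Rationalizes (Set.range B) c k r Γ ∧ m = Set.ncard {y : X | r x y}} with hS2def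
  have hS2ne : S2.Nonempty := ⟨Set.ncard {y : X | r0 x y}, r0, Γ0, hR0, rfl⟩
  have h21 : S2 ⊆ S1 := by
    rintro m ⟨r, Γ, hR, rfl⟩
    obtain ⟨u, A, s, hsol, hset⟩ := dirA hchoice hR x
    exact ⟨u, A, s, hsol, by rw [hset]⟩
  have hS1ne : S1.Nonempty := hS2ne.mono h21
  have h12 : ∀ m ∈ S1, ∃ m' ∈ S2, m' ≤ m := by
    rintro m ⟨u, A, s, ⟨⟨hA1, hA2, hA3, hA4, hA5⟩, hsx, hclose⟩, rfl⟩
    haveI : Nonempty X := ⟨x⟩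
    set M : ℝ := 1 + Finset.univ.sup' Finset.univ_nonempty (fun y => u x - u y) with hMdef
    have hM : ∀ y : X, 1 + (u x - u y) ≤ M := by
      intro y
      have := Finset.le_sup' (fun y => u x - u y) (Finset.mem_univ y)
      simp only [hMdef]
      linarith
    have hMpos : 0 < M := by
      have := hM x
      linarith
    set v : X → ℝ := fun y => u y + (if s y then 0 else M) with hvdef
    set N := Fintype.card X with hN
    set f : X → ℕ := fun a => ((Fintype.equivFin X) a : ℕ) with hf
    have hfN : ∀ a, f a < N := fun a => (Fintype.equivFin X a).2
    have hfinj : Function.Injective f := by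
      intro a b hab
      exact (Fintype.equivFin X).injective (Fin.val_injective hab)
    set e : X → ℝ ×ₗ ℕ := fun a => toLex (v a, N - f a) with hedef
    have he_lt : ∀ a b : X, v a < v b → e a < e b := by
      intro a b h
      simp only [hedef]
      exact Prod.Lex.lt_iff.mpr (Or.inl h)
    have he_inj : Function.Injective e := by
      intro a b hab
      simp only [hedef] at hab
      have h1 : (v a, N - f a) = (v b, N - f b) := toLex_inj.mp hab
      have h2 : N - f a = N - f b := congrArg Prod.snd h1
      have h3 : f a = f b := by
        have ha := hfN a
        have hb := hfN b
        omega
      exact hfinj h3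
    have h3' : ∀ i, ∀ y ∈ A i, y ≠ c (B i) → e y < e (c (B i)) := by
      intro i y hy hyne
      apply he_lt
      have hu := hA3 i y hy hyne
      simp only [hvdef]
      by_cases hsc : s (c (B i))
      · rw [if_pos hsc, if_pos (hclose i y hy hsc)]
        linarith
      · rw [if_neg hsc]
        by_cases hsy : s y
        · rw [if_pos hsy]
          linarith
        · rw [if_neg hsy]
          linarith
    have hRat := dirB he_inj hchoice hA1 hA2 h3' hA4 hA5 x
    refine ⟨Set.ncard {y : X | (fun a b => e b < e a) x y},
      ⟨(fun a b => e b < e a), GamF B c e x, hRat, rfl⟩, ?_⟩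
    apply Set.ncard_le_ncard ?_ (Set.toFinite _)
    intro y hy
    simp only [Set.mem_setOf_eq] at hy ⊢
    constructor
    · rintro rfl
      exact lt_irrefl _ hy
    · by_contra hsy
      have hvx : v x = u x := by simp [hvdef, hsx]
      have hvy : v y = u y + M := by simp [hvdef, hsy]
      have hvlt : v x < v y := by
        have := hM y
        rw [hvx, hvy]
        linarith
      exact lt_asymm hy (he_lt _ _ hvlt)
  have hle1 : sInf S1 ≤ sInf S2 := Nat.sInf_le (h21 (Nat.sInf_mem hS2ne))
  have hle2 : sInf S2 ≤ sInf S1 := by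
    obtain ⟨m', hm', hle⟩ := h12 _ (Nat.sInf_mem hS1ne)
    exact le_trans (Nat.sInf_le hm') hle
  have heq : sInf S1 = sInf S2 := le_antisymm hle1 hle2
  refine ⟨heq, ?_⟩
  obtain ⟨r, Γ, hR, hmeq⟩ := Nat.sInf_mem hS2ne
  exact ⟨r, Γ, hR, by rw [← hmeq, ← heq]⟩
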